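/- Let B → K and C → K be ring homomorphisms with C → K surjective, A = B ×_K C, and let M be an A-module with M ⊗_A B = 0 and M ⊗_A C = 0. Then M = 0. -/
import Mathlib


open TensorProduct

/-- If `M ⊗_A B = 0` and `M ⊗_A C = 0` for a Ferrand fiber product `A = B ×_K C`,
then `M = 0`. -/
theorem ferrand_module_vanishing
    (A B C K : Type*) [CommRing A] [CommRing B] [CommRing C] [CommRing K]
    [Algebra A B] [Algebra A C] [Algebra A K] [Algebra B K] [Algebra C K]
    [IsScalarTower A B K] [IsScalarTower A C K]
    (hsurj : Function.Surjective (algebraMap C K))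
    (hpull : ∀ (b : B) (c : C), algebraMap B K b = algebraMap C K c →
      ∃! a : A, algebraMap A B a = b ∧ algebraMap A C a = c)
    (M : Type*) [AddCommGroup M] [Module A M]
    (hB : Subsingleton (M ⊗[A] B))
    (hC : Subsingleton (M ⊗[A] C)) :
    Subsingleton M := by
  classical
  set I : Ideal A := RingHom.ker (algebraMap A B) with hI
  -- `A → B` is surjective
  have hABsurj : ∀ b : B, ∃ a : A, algebraMap A B a = b := by
    intro b
    obtain ⟨c, hc⟩ := hsurj (algebraMap B K b)
    obtain ⟨a, ⟨haB, _⟩, _⟩ := hpull b c hc.symm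
    exact ⟨a, haB⟩
  -- Step 1: every `m` lies in `I • M`.
  have step1 : ∀ m : M, m ∈ I • (⊤ : Submodule A M) := by
    intro m
    set Q := M ⧸ (I • (⊤ : Submodule A M))
    have hkill : ∀ x ∈ I, ∀ m' : M, (Submodule.Quotient.mk (x • m') : Q) = 0 := by
      intro x hx m'
      exact (Submodule.Quotient.mk_eq_zero _).mpr
        (Submodule.smul_mem_smul hx Submodule.mem_top)
    set σ : B → A := fun b => (hABsurj b).choose with hσ
    have hσB : ∀ b : B, algebraMap A B (σ b) = b := fun b => (hABsurj b).choose_spec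
    have hdiff : ∀ (x : A) (m' : M), algebraMap A B x = 0 →
        (Submodule.Quotient.mk (x • m') : Q) = 0 := by
      intro x m' hx
      exact hkill x hx m'
    -- the bilinear map `M × B → Q`, `(m, b) ↦ [σ b • m]`
    set f : M → B → Q := fun m' b => Submodule.Quotient.mk (σ b • m') with hf
    have h3 : ∀ (m' : M) (b₁ b₂ : B), f m' (b₁ + b₂) = f m' b₁ + f m' b₂ := by
      intro m' b₁ b₂
      have key : σ (b₁ + b₂) = (σ (b₁ + b₂) - σ b₁ - σ b₂) + σ b₁ + σ b₂ := by ring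
      have hz : algebraMap A B (σ (b₁ + b₂) - σ b₁ - σ b₂) = 0 := by
        simp [map_sub, hσB]
      calc f m' (b₁ + b₂)
          = Submodule.Quotient.mk (σ (b₁ + b₂) • m') := rfl
        _ = Submodule.Quotient.mk (((σ (b₁ + b₂) - σ b₁ - σ b₂) + σ b₁ + σ b₂) • m') := by
            rw [← key]
        _ = Submodule.Quotient.mk ((σ (b₁ + b₂) - σ b₁ - σ b₂) • m')
              + Submodule.Quotient.mk (σ b₁ • m') + Submodule.Quotient.mk (σ b₂ • m') := by
            rw [add_smul, add_smul, Submodule.Quotient.mk_add, Submodule.Quotient.mk_add]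
        _ = f m' b₁ + f m' b₂ := by rw [hdiff _ _ hz, zero_add]
    have h4 : ∀ (a : A) (m' : M) (b : B), f m' (a • b) = a • f m' b := by
      intro a m' b
      have key : σ (a • b) = (σ (a • b) - a * σ b) + a * σ b := by ring
      have hz : algebraMap A B (σ (a • b) - a * σ b) = 0 := by
        simp [map_sub, hσB, Algebra.smul_def]
      calc f m' (a • b)
          = Submodule.Quotient.mk (σ (a • b) • m') := rfl
        _ = Submodule.Quotient.mk (((σ (a • b) - a * σ b) + a * σ b) • m') := by
            rw [← key]
        _ = Submodule.Quotient.mk ((σ (a • b) - a * σ b) • m')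
              + Submodule.Quotient.mk ((a * σ b) • m') := by rw [add_smul, Submodule.Quotient.mk_add]
        _ = a • f m' b := by
            rw [hdiff _ _ hz, zero_add, mul_smul, hf]
            rfl
    set bil : M →ₗ[A] B →ₗ[A] Q := LinearMap.mk₂ A f
      (fun m₁ m₂ b => by simp only [hf, smul_add, Submodule.Quotient.mk_add])
      (fun a m' b => by
        simp only [hf, smul_comm (σ b) a, Submodule.Quotient.mk_smul])
      h3 h4
    set g : M ⊗[A] B →ₗ[A] Q := TensorProduct.lift bil with hg
    have hzero : (m ⊗ₜ[A] (1 : B) : M ⊗[A] B) = 0 := Subsingleton.elim _ _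
    have : (Submodule.Quotient.mk m : Q) = 0 := by
      have h1 : g (m ⊗ₜ (1 : B)) = Submodule.Quotient.mk (σ 1 • m) := rfl
      have key : σ (1 : B) = (σ 1 - 1) + 1 := by ring
      have hz : algebraMap A B (σ (1 : B) - 1) = 0 := by simp [map_sub, hσB]
      have h2 : Submodule.Quotient.mk (σ (1:B) • m)
          = (Submodule.Quotient.mk m : Q) := by
        rw [key, add_smul, one_smul]
        have := hdiff _ m hz
        rw [show (Submodule.Quotient.mk ((σ (1:B) - 1) • m + m) : Q)
            = Submodule.Quotient.mk ((σ (1:B) - 1) • m) + Submodule.Quotient.mk m from rfl,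
          this, zero_add]
      rw [← h2, ← h1, hzero, map_zero]
    exact (Submodule.Quotient.mk_eq_zero _).mp this
  -- Step 2: every element of `I` kills `M`.
  have step2 : ∀ i ∈ I, ∀ m : M, i • m = 0 := by
    intro i hi m
    have hiB : algebraMap A B i = 0 := hi
    have hiK : ∀ c : C, algebraMap C K (c * algebraMap A C i) = 0 := by
      intro c
      have : algebraMap C K (algebraMap A C i) = algebraMap B K (algebraMap A B i) := by
        rw [← IsScalarTower.algebraMap_apply, ← IsScalarTower.algebraMap_apply]
      rw [map_mul, this, hiB, map_zero, mul_zero]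
    have hpair : ∀ c : C, algebraMap B K (0 : B) = algebraMap C K (c * algebraMap A C i) := by
      intro c; rw [map_zero, hiK]
    set e : C → A := fun c => (hpull 0 (c * algebraMap A C i) (hpair c)).choose with he
    have heSpec : ∀ c : C, algebraMap A B (e c) = 0 ∧
        algebraMap A C (e c) = c * algebraMap A C i :=
      fun c => (hpull 0 (c * algebraMap A C i) (hpair c)).choose_spec.1
    have heUniq : ∀ (c : C) (a : A), algebraMap A B a = 0 →
        algebraMap A C a = c * algebraMap A C i → a = e c := by
      intro c a h1 h2
      exact (hpull 0 (c * algebraMap A C i) (hpair c)).choose_spec.2 a ⟨h1, h2⟩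
    have heAdd : ∀ c₁ c₂ : C, e (c₁ + c₂) = e c₁ + e c₂ := by
      intro c₁ c₂
      refine ((heUniq (c₁ + c₂) (e c₁ + e c₂) ?_ ?_)).symm
      · rw [map_add, (heSpec c₁).1, (heSpec c₂).1, add_zero]
      · rw [map_add, (heSpec c₁).2, (heSpec c₂).2, add_mul]
    have heSmul : ∀ (a : A) (c : C), e (a • c) = a * e c := by
      intro a c
      refine ((heUniq (a • c) (a * e c) ?_ ?_)).symm
      · rw [map_mul, (heSpec c).1, mul_zero]
      · rw [map_mul, (heSpec c).2, Algebra.smul_def]; ring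
    set f : M → C → M := fun m' c => e c • m' with hf
    set bil : M →ₗ[A] C →ₗ[A] M := LinearMap.mk₂ A f
      (fun m₁ m₂ c => by simp only [hf, smul_add])
      (fun a m' c => by simp only [hf, smul_comm (e c) a])
      (fun m' c₁ c₂ => by simp only [hf, heAdd, add_smul])
      (fun a m' c => by simp only [hf, heSmul, mul_smul])
    set g : M ⊗[A] C →ₗ[A] M := TensorProduct.lift bil with hg
    have he1 : e 1 = i := by
      refine ((heUniq 1 i hiB ?_)).symm
      rw [one_mul]
    have hzero : (m ⊗ₜ[A] (1 : C) : M ⊗[A] C) = 0 := Subsingleton.elim _ _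
    have : g (m ⊗ₜ (1 : C)) = i • m := by
      show e 1 • m = i • m
      rw [he1]
    rw [hzero, map_zero] at this
    exact this.symm
  -- Conclusion
  have : (I • (⊤ : Submodule A M)) ≤ ⊥ := by
    refine Submodule.smul_le.mpr ?_
    intro r hr n _
    simp [step2 r hr n]
  refine subsingleton_of_forall_eq 0 fun m => ?_
  exact (Submodule.mem_bot A).mp (this (step1 m))
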